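/- Let f : ℝⁿ → ℝⁿ satisfy (∇V(x))ᵀf(x) < 0 for all x ≠ x* where V(x) = (x-x*)ᵀP(x-x*), P symmetric positive definite. Define g(x) = f(x) when [E(x)⁻¹f(x)]₁ < 0 and g(x) = M(x)f(x) when [E(x)⁻¹f(x)]₁ ≥ 0, where M(x) = E(x)D(x)E(x)⁻¹, E(x) has first column r(x) = (x-x*)/‖x-x*‖ and D(x) = diag(1-Γ(x), 1, …, 1) with 0 < Γ(x) ≤ 1 inside the cut region. Then (∇V(x))ᵀg(x) < 0 for all x ≠ x* in the cut region. -/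

import Mathlib

open Matrix

/-- Theorem 1 (full Lyapunov-decrease claim): the piecewise modulated system
`g`, which equals the nominal `f` when the flow moves away from the cuts
(`[E(x)⁻¹f(x)]₁ < 0`) and equals `M(x)f(x)` otherwise, strictly decreases the
quadratic Lyapunov function in the cut region where `0 < Γ(x) ≤ 1`. -/
theorem modulated_ds_lyapunov_decrease {n : ℕ} [NeZero n]
    (P : Matrix (Fin n) (Fin n) ℝ) (hP : P.PosDef)
    (xs : Fin n → ℝ)
    (f g : (Fin n → ℝ) → (Fin n → ℝ))
    (hV : ∀ x, x ≠ xs → ((2 : ℝ) • P.mulVec (x - xs)) ⬝ᵥ f x < 0)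
    (D : Set (Fin n → ℝ)) (Γ : (Fin n → ℝ) → ℝ)
    (hΓ : ∀ x ∈ D, 0 < Γ x ∧ Γ x ≤ 1)
    (E : (Fin n → ℝ) → Matrix (Fin n) (Fin n) ℝ)
    (hE : ∀ x, IsUnit (E x).det)
    (hcol : ∀ x, x ≠ xs →
      (fun j => E x j 0) = (Real.sqrt ((x - xs) ⬝ᵥ (x - xs)))⁻¹ • (x - xs))
    (hg1 : ∀ x, ((E x)⁻¹.mulVec (f x)) 0 < 0 → g x = f x)
    (hg2 : ∀ x, 0 ≤ ((E x)⁻¹.mulVec (f x)) 0 →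
      g x = (E x * Matrix.diagonal (fun i => if i = 0 then 1 - Γ x else 1)
        * (E x)⁻¹).mulVec (f x)) :
    ∀ x ∈ D, x ≠ xs → ((2 : ℝ) • P.mulVec (x - xs)) ⬝ᵥ g x < 0 := by

  intro x hxD hx
  rcases lt_or_ge (((E x)⁻¹.mulVec (f x)) 0) 0 with h | h
  · rw [hg1 x h]; exact hV x hx
  · rw [hg2 x h]
    set v : Fin n → ℝ := x - xs with hv
    have hvne : v ≠ 0 := sub_ne_zero.mpr hx
    set c : Fin n → ℝ := (E x)⁻¹.mulVec (f x) with hc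
    set a : ℝ := Γ x * c 0 with ha
    have ha0 : 0 ≤ a := mul_nonneg (hΓ x hxD).1.le h
    have hEc : (E x).mulVec c = f x := by
      rw [hc, Matrix.mulVec_mulVec, Matrix.mul_nonsing_inv _ (hE x), Matrix.one_mulVec]
    have hdiag : (Matrix.diagonal (fun i => if i = 0 then 1 - Γ x else 1)).mulVec c
        = c - a • (Pi.single 0 1 : Fin n → ℝ) := by
      funext j
      simp only [Matrix.mulVec_diagonal, Pi.sub_apply, Pi.smul_apply, smul_eq_mul]
      by_cases hj : j = 0
      · subst hj; simp [ha]; ring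
      · simp [hj, Pi.single_eq_of_ne hj]
    have hsingle : (E x).mulVec (Pi.single 0 1) = fun j => E x j 0 := by
      funext j
      simp [Matrix.mulVec_single]
    have hgval : (E x * Matrix.diagonal (fun i => if i = 0 then 1 - Γ x else 1)
        * (E x)⁻¹).mulVec (f x) = f x - a • fun j => E x j 0 := by
      rw [Matrix.mul_assoc, ← Matrix.mulVec_mulVec, ← Matrix.mulVec_mulVec, ← hc, hdiag,
        Matrix.mulVec_sub, Matrix.mulVec_smul, hEc, hsingle]
    rw [hgval, hcol x hx]
    have hvv : 0 < v ⬝ᵥ v := by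
      obtain ⟨i, hi⟩ := Function.ne_iff.mp hvne
      exact Finset.sum_pos' (fun j _ => mul_self_nonneg (v j))
        ⟨i, Finset.mem_univ i, mul_self_pos.mpr hi⟩
    have hPv : 0 < v ⬝ᵥ P.mulVec v := hP.dotProduct_mulVec_pos hvne
    have hs : 0 < Real.sqrt (v ⬝ᵥ v) := Real.sqrt_pos.mpr hvv
    rw [dotProduct_sub]
    have h1 : ((2 : ℝ) • P.mulVec v) ⬝ᵥ f x < 0 := hV x hx
    have h2 : 0 ≤ ((2 : ℝ) • P.mulVec v) ⬝ᵥ (a • (Real.sqrt (v ⬝ᵥ v))⁻¹ • v) := by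
      have heq : ((2 : ℝ) • P.mulVec v) ⬝ᵥ (a • (Real.sqrt (v ⬝ᵥ v))⁻¹ • v)
          = 2 * (a * ((Real.sqrt (v ⬝ᵥ v))⁻¹ * (v ⬝ᵥ P.mulVec v))) := by
        simp [smul_dotProduct, dotProduct_smul, smul_eq_mul, dotProduct_comm]; ring
      rw [heq]
      positivity
    linarith
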